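/- Pinsker's inequality: for probability distributions p, q on a finite set, the relative entropy satisfies D(q‖p) ≥ (1/2)‖p − q‖_1², where ‖·‖_1 is the total (ℓ¹) variation and D is in nats. -/

import Mathlib

open Real Finset

/-- `log t ≥ 2(t-1)/(t+1)` for `t ≥ 1`. -/
lemma log_ge_pade {t : ℝ} (ht : 1 ≤ t) : 2*(t-1)/(t+1) ≤ Real.log t := by
  have key : MonotoneOn (fun t : ℝ => Real.log t - 2*(t-1)/(t+1)) (Set.Ici 1) := by
    have hderiv : ∀ x ∈ interior (Set.Ici (1:ℝ)),
        HasDerivWithinAt (fun t : ℝ => Real.log t - 2*(t-1)/(t+1))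
          ((x-1)^2/(x*(x+1)^2)) (interior (Set.Ici (1:ℝ))) x := by
      intro x hx
      rw [interior_Ici] at hx
      have hx1 : (1:ℝ) < x := hx
      have hx0 : x ≠ 0 := by positivity
      have hx10 : x + 1 ≠ 0 := by positivity
      have h1 : HasDerivAt (fun t : ℝ => Real.log t - 2*(t-1)/(t+1))
          (1/x - (2*1*(x+1) - 2*(x-1)*1)/(x+1)^2) x := by
        have hlog : HasDerivAt Real.log (1/x) x := by
          simpa [one_div] using Real.hasDerivAt_log hx0
        have hnum : HasDerivAt (fun t : ℝ => 2*(t-1)) (2*1) x :=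
          ((hasDerivAt_id x).sub_const 1).const_mul 2
        have hden : HasDerivAt (fun t : ℝ => t+1) 1 x :=
          (hasDerivAt_id x).add_const 1
        exact hlog.sub (hnum.div hden hx10)
      have : (1/x - (2*1*(x+1) - 2*(x-1)*1)/(x+1)^2) = (x-1)^2/(x*(x+1)^2) := by
        field_simp; ring
      rw [this] at h1
      exact h1.hasDerivWithinAt
    apply monotoneOn_of_hasDerivWithinAt_nonneg (convex_Ici 1) _ hderiv
    · intro x hx
      rw [interior_Ici] at hx
      have : (0:ℝ) < x := by linarith [(show (1:ℝ) < x from hx).le]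
      positivity
    · apply ContinuousOn.sub
      · exact Real.continuousOn_log.mono (by intro x hx; simp at hx ⊢; linarith)
      · apply ContinuousOn.div
        · fun_prop
        · fun_prop
        · intro x hx; simp at hx; intro h; linarith
  have := key (Set.self_mem_Ici) (Set.mem_Ici.2 ht) ht
  simp at this
  linarith

/-- `log t ≤ 2(t-1)/(t+1)` for `0 < t ≤ 1`. -/
lemma log_le_pade {t : ℝ} (ht0 : 0 < t) (ht : t ≤ 1) : Real.log t ≤ 2*(t-1)/(t+1) := by
  have h1 : 1 ≤ 1/t := by rw [le_div_iff₀ ht0]; linarith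
  have := log_ge_pade h1
  rw [Real.log_div one_ne_zero ht0.ne', Real.log_one] at this
  have ht1 : t + 1 ≠ 0 := by positivity
  have : Real.log t ≤ -(2*(1/t-1)/(1/t+1)) := by linarith
  calc Real.log t ≤ -(2*(1/t-1)/(1/t+1)) := this
    _ = 2*(t-1)/(t+1) := by field_simp; ring

private lemma g_hasDerivAt {x : ℝ} (hx0 : 0 < x) :
    HasDerivAt (fun t : ℝ => t * Real.log t - t + 1 - 3*(t-1)^2/(2*(t+2)))
      (Real.log x - 3*(x-1)*(x+5)/(2*(x+2)^2)) x := by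
  have hx2 : 2*(x+2) ≠ 0 := by positivity
  have hmul : HasDerivAt (fun t : ℝ => t * Real.log t) (1 * Real.log x + x * x⁻¹) x :=
    (hasDerivAt_id x).mul (Real.hasDerivAt_log hx0.ne')
  have hnum : HasDerivAt (fun t : ℝ => 3*(t-1)^2) (3*((2:ℕ)*(x-1)^1*1)) x :=
    (((hasDerivAt_id x).sub_const 1).pow 2).const_mul 3
  have hden : HasDerivAt (fun t : ℝ => 2*(t+2)) (2*1) x :=
    ((hasDerivAt_id x).add_const 2).const_mul 2
  have h := ((hmul.sub (hasDerivAt_id x)).add_const 1).sub (hnum.div hden hx2)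
  refine h.congr_deriv ?_
  field_simp
  ring

private lemma g_nonneg {t : ℝ} (ht : 0 < t) :
    0 ≤ t * Real.log t - t + 1 - 3*(t-1)^2/(2*(t+2)) := by
  set g : ℝ → ℝ := fun t => t * Real.log t - t + 1 - 3*(t-1)^2/(2*(t+2)) with hg
  have hg1 : g 1 = 0 := by simp [hg]
  rcases le_or_gt 1 t with h1 | h1
  · have mono : MonotoneOn g (Set.Ici 1) := by
      apply monotoneOn_of_hasDerivWithinAt_nonneg (convex_Ici 1)
        (f' := fun x => Real.log x - 3*(x-1)*(x+5)/(2*(x+2)^2))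
      · intro x hx
        have hx1 : (1:ℝ) ≤ x := hx
        exact (g_hasDerivAt (by linarith)).continuousAt.continuousWithinAt
      · intro x hx
        rw [interior_Ici] at hx
        exact (g_hasDerivAt (by linarith [(show (1:ℝ) < x from hx).le])).hasDerivWithinAt
      · intro x hx
        rw [interior_Ici] at hx
        have hx1 : (1:ℝ) < x := hx
        have hlog := log_ge_pade hx1.le
        have hfrac : 3*(x-1)*(x+5)/(2*(x+2)^2) ≤ 2*(x-1)/(x+1) := by
          rw [div_le_div_iff₀ (by nlinarith) (by linarith)]
          nlinarith [pow_pos (show (0:ℝ) < x - 1 by linarith) 3, sq_nonneg (x-1)]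
        linarith
    have := mono Set.self_mem_Ici (Set.mem_Ici.2 h1) h1
    rw [hg1] at this; exact this
  · have anti : AntitoneOn g (Set.Ioc 0 1) := by
      apply antitoneOn_of_hasDerivWithinAt_nonpos (convex_Ioc 0 1)
        (f' := fun x => Real.log x - 3*(x-1)*(x+5)/(2*(x+2)^2))
      · intro x hx
        exact (g_hasDerivAt hx.1).continuousAt.continuousWithinAt
      · intro x hx
        rw [interior_Ioc] at hx
        exact (g_hasDerivAt hx.1).hasDerivWithinAt
      · intro x hx
        rw [interior_Ioc] at hx
        obtain ⟨hxa, hxb⟩ := hx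
        have hlog := log_le_pade hxa hxb.le
        have hfrac : 2*(x-1)/(x+1) ≤ 3*(x-1)*(x+5)/(2*(x+2)^2) := by
          rw [div_le_div_iff₀ (by linarith) (by nlinarith)]
          nlinarith [mul_nonneg (sq_nonneg (x-1)) (show (0:ℝ) ≤ 1 - x by linarith)]
        linarith
    have := anti (Set.mem_Ioc.2 ⟨ht, h1.le⟩) (Set.mem_Ioc.2 ⟨one_pos, le_refl 1⟩) h1.le
    rw [hg1] at this; exact this

lemma key_bound {t : ℝ} (ht : 0 ≤ t) :
    3*(t-1)^2/(2*(t+2)) ≤ t * Real.log t - t + 1 := by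
  rcases eq_or_lt_of_le ht with h | h
  · rw [← h]; norm_num
  · linarith [g_nonneg h]

/-- Pinsker's inequality, `D(q‖p) ≥ (1/2) ‖p - q‖₁²`, for
probability distributions on a finite set with `q` absolutely continuous
with respect to `p`. -/
theorem pinsker_inequality {ι : Type*} [Fintype ι]
    (p q : ι → ℝ) (hp0 : ∀ i, 0 ≤ p i) (hq0 : ∀ i, 0 ≤ q i)
    (hp1 : ∑ i, p i = 1) (hq1 : ∑ i, q i = 1)
    (hac : ∀ i, p i = 0 → q i = 0) :
    (1 / 2) * (∑ i, |p i - q i|) ^ 2 ≤ ∑ i, q i * Real.log (q i / p i) := by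
  -- pointwise bound
  have point : ∀ i, 3*(q i - p i)^2/(2*(q i + 2*p i)) ≤
      q i * Real.log (q i / p i) - q i + p i := by
    intro i
    rcases eq_or_lt_of_le (hp0 i) with hp | hp
    · rw [← hp, hac i hp.symm]; norm_num
    · have ht : 0 ≤ q i / p i := div_nonneg (hq0 i) hp.le
      have hkey := mul_le_mul_of_nonneg_left (key_bound ht) hp.le
      have e1 : p i * (q i / p i * Real.log (q i / p i) - q i / p i + 1)
          = q i * Real.log (q i / p i) - q i + p i := by
        field_simp
      have e2 : p i * (3*(q i / p i - 1)^2/(2*(q i / p i + 2)))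
          = 3*(q i - p i)^2/(2*(q i + 2*p i)) := by
        have h2 : q i + 2 * p i > 0 := by linarith [hq0 i]
        rw [eq_div_iff (by positivity)]
        have h2' : q i + p i * 2 ≠ 0 := by linarith
        field_simp
      rw [e1, e2] at hkey
      exact hkey
  -- sum of the pointwise bounds
  have sum_bound : ∑ i, 3*(q i - p i)^2/(2*(q i + 2*p i)) ≤
      ∑ i, q i * Real.log (q i / p i) := by
    calc ∑ i, 3*(q i - p i)^2/(2*(q i + 2*p i))
        ≤ ∑ i, (q i * Real.log (q i / p i) - q i + p i) :=
          Finset.sum_le_sum fun i _ => point i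
      _ = ∑ i, q i * Real.log (q i / p i) := by
          rw [Finset.sum_add_distrib, Finset.sum_sub_distrib, hp1, hq1]; ring
  -- Cauchy-Schwarz
  have CS := Finset.sum_mul_sq_le_sq_mul_sq Finset.univ
    (fun i => |q i - p i| / Real.sqrt (q i + 2*p i))
    (fun i => Real.sqrt (q i + 2*p i))
  have hzero : ∀ i : ι, q i + 2*p i = 0 → (p i = 0 ∧ q i = 0) := by
    intro i h
    constructor <;> [skip; skip] <;> linarith [hp0 i, hq0 i]
  have hfg : ∀ i : ι, |q i - p i| / Real.sqrt (q i + 2*p i) * Real.sqrt (q i + 2*p i)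
      = |p i - q i| := by
    intro i
    have hnn : 0 ≤ q i + 2*p i := by linarith [hp0 i, hq0 i]
    rcases eq_or_lt_of_le hnn with h | h
    · obtain ⟨h1, h2⟩ := hzero i h.symm
      simp [h1, h2]
    · rw [div_mul_cancel₀ _ (Real.sqrt_ne_zero'.mpr h), abs_sub_comm]
  have hf2 : ∀ i : ι, (|q i - p i| / Real.sqrt (q i + 2*p i))^2
      = (q i - p i)^2 / (q i + 2*p i) := by
    intro i
    have hnn : 0 ≤ q i + 2*p i := by linarith [hp0 i, hq0 i]
    rcases eq_or_lt_of_le hnn with h | h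
    · obtain ⟨h1, h2⟩ := hzero i h.symm
      simp [h1, h2]
    · rw [div_pow, sq_abs, Real.sq_sqrt hnn]
  have hg2 : ∑ i : ι, (Real.sqrt (q i + 2*p i))^2 = 3 := by
    have : ∀ i : ι, (Real.sqrt (q i + 2*p i))^2 = q i + 2*p i := by
      intro i
      exact Real.sq_sqrt (by linarith [hp0 i, hq0 i])
    rw [Finset.sum_congr rfl fun i _ => this i, Finset.sum_add_distrib, hq1,
      ← Finset.mul_sum, hp1]
    norm_num
  simp only [hfg, hf2, hg2] at CS
  have e3 : ∀ i : ι, 3*(q i - p i)^2/(2*(q i + 2*p i))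
      = (3/2) * ((q i - p i)^2 / (q i + 2*p i)) := by
    intro i; rw [div_mul_div_comm]
  have : (1/2 : ℝ) * (∑ i, |p i - q i|) ^ 2
      ≤ (1/2) * ((∑ i, (q i - p i)^2 / (q i + 2*p i)) * 3) := by
    nlinarith [CS]
  calc (1/2 : ℝ) * (∑ i, |p i - q i|) ^ 2
      ≤ (1/2) * ((∑ i, (q i - p i)^2 / (q i + 2*p i)) * 3) := this
    _ = ∑ i, 3*(q i - p i)^2/(2*(q i + 2*p i)) := by
        rw [Finset.sum_congr rfl fun i _ => e3 i, ← Finset.mul_sum]; ring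
    _ ≤ _ := sum_bound
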